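/- Let X(0), X(1), ... be a supermartingale with respect to a filtration F, with |ΔX(i)| ≤ K for all i, and let V(i) := Σ_{j=0}^{i-1} E[(ΔX(j))² | F(j)]. Then for any t, v > 0, the probability that there exists i with X(i) ≥ X(0) + t and V(i) ≤ v is at most exp(−t²/(2(v + Kt))). -/

import Mathlib

open MeasureTheory

section FreedmanAux
open Real

section Scalar
/-- `exp y ≤ 1 + y + y²/2` for `y ≤ 0`. -/
lemma exp_le_quad_of_nonpos {y : ℝ} (hy : y ≤ 0) :
    Real.exp y ≤ 1 + y + y ^ 2 / 2 := by
  have key : AntitoneOn (fun y : ℝ => 1 + y + y ^ 2 / 2 - Real.exp y) (Set.Iic 0) := by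
    have hderiv : ∀ x : ℝ, HasDerivAt (fun y : ℝ => 1 + y + y ^ 2 / 2 - Real.exp y)
        (1 + x - Real.exp x) x := by
      intro x
      have h1 : HasDerivAt (fun y : ℝ => 1 + y + y ^ 2 / 2 - Real.exp y)
          (0 + 1 + (2 * x ^ 1 * 1) / 2 - Real.exp x) x := by
        exact (((hasDerivAt_const x (1:ℝ)).add (hasDerivAt_id x)).add
          (((hasDerivAt_id x).pow 2).div_const 2)).sub (Real.hasDerivAt_exp x)
      convert h1 using 1
      ring
    refine antitoneOn_of_deriv_nonpos (convex_Iic 0) ?_ ?_ ?_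
    · exact (Continuous.continuousOn (by continuity))
    · intro x _
      exact (hderiv x).differentiableAt.differentiableWithinAt
    · intro x hx
      rw [(hderiv x).deriv]
      have := Real.add_one_le_exp x
      linarith
  have h := key (Set.mem_Iic.2 hy) (Set.mem_Iic.2 le_rfl) hy
  simp only [Real.exp_zero] at h
  nlinarith [h]

/-- `exp y ≤ 1 + y + y²/(2(1-y))` for `0 ≤ y < 1`. -/
lemma exp_le_quad_of_lt_one {y : ℝ} (h0 : 0 ≤ y) (h1 : y < 1) :
    Real.exp y ≤ 1 + y + y ^ 2 / (2 * (1 - y)) := by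
  -- equivalent to (1 - y) * exp y ≤ 1 - y²/2
  have key : MonotoneOn (fun y : ℝ => 1 - y ^ 2 / 2 - (1 - y) * Real.exp y) (Set.Ici 0) := by
    have hderiv : ∀ x : ℝ, HasDerivAt (fun y : ℝ => 1 - y ^ 2 / 2 - (1 - y) * Real.exp y)
        (x * (Real.exp x - 1)) x := by
      intro x
      have h1 : HasDerivAt (fun y : ℝ => 1 - y ^ 2 / 2 - (1 - y) * Real.exp y)
          (0 - (2 * x ^ 1 * 1) / 2 - ((0 - 1) * Real.exp x + (1 - x) * Real.exp x)) x := by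
        exact ((hasDerivAt_const x (1:ℝ)).sub (((hasDerivAt_id x).pow 2).div_const 2)).sub
          (((hasDerivAt_const x (1:ℝ)).sub (hasDerivAt_id x)).mul (Real.hasDerivAt_exp x))
      convert h1 using 1
      ring
    refine monotoneOn_of_deriv_nonneg (convex_Ici 0) ?_ ?_ ?_
    · exact (Continuous.continuousOn (by continuity))
    · intro x _
      exact (hderiv x).differentiableAt.differentiableWithinAt
    · intro x hx
      rw [(hderiv x).deriv]
      rw [interior_Ici, Set.mem_Ioi] at hx
      have := Real.add_one_le_exp x
      nlinarith
  have h := key (Set.mem_Ici.2 le_rfl) (Set.mem_Ici.2 h0) h0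
  simp only [Real.exp_zero] at h
  have h2 : 0 < 1 - y := by linarith
  rw [← sub_nonneg]
  have h3 : 0 < 2 * (1 - y) := by linarith
  rw [show 1 + y + y ^ 2 / (2 * (1 - y)) - Real.exp y
      = ((1 + y) * (2 * (1 - y)) + y ^ 2 - Real.exp y * (2 * (1 - y))) / (2 * (1 - y)) by
    field_simp]
  apply div_nonneg _ h3.le
  nlinarith [h]

/-- key pointwise bound: `exp (l x) ≤ 1 + l x + c x²` for `|x| ≤ K`,
with `c = l²/(2(1 - lK))`. -/
lemma exp_le_one_add_mul_add_sq {l K x : ℝ} (hl : 0 ≤ l) (hlK : l * K < 1)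
    (hx : |x| ≤ K) :
    Real.exp (l * x) ≤ 1 + l * x + l ^ 2 / (2 * (1 - l * K)) * x ^ 2 := by
  have hK0 : 0 ≤ K := le_trans (abs_nonneg x) hx
  have h1K : 0 < 1 - l * K := by linarith
  rcases le_or_gt x 0 with hx0 | hx0
  · have hy : l * x ≤ 0 := mul_nonpos_of_nonneg_of_nonpos hl hx0
    refine (exp_le_quad_of_nonpos hy).trans ?_
    have : (l * x) ^ 2 / 2 ≤ l ^ 2 / (2 * (1 - l * K)) * x ^ 2 := by
      rw [mul_pow, div_mul_eq_mul_div, mul_comm]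
      apply div_le_div_of_nonneg_left (by positivity) (by linarith) (by nlinarith)
    linarith
  · have hxK : x ≤ K := le_trans (le_abs_self x) hx
    have hy0 : 0 ≤ l * x := mul_nonneg hl hx0.le
    have hy1 : l * x < 1 := lt_of_le_of_lt (by nlinarith) hlK
    refine (exp_le_quad_of_lt_one hy0 hy1).trans ?_
    have h1y : 0 < 1 - l * x := by linarith
    have : (l * x) ^ 2 / (2 * (1 - l * x)) ≤ l ^ 2 / (2 * (1 - l * K)) * x ^ 2 := by
      rw [mul_pow, div_mul_eq_mul_div, mul_comm]
      apply div_le_div_of_nonneg_left (by positivity) (by linarith) (by nlinarith)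
    linarith

end Scalar

section Ville
/-- Ville's inequality: for a nonnegative supermartingale `Z` with `Z 0 = 1`,
`P(∃ i, Z i ≥ ε) ≤ 1/ε`. -/
lemma ville_inequality {Ω : Type*} {m : MeasurableSpace Ω}
    {μ : Measure Ω} [IsProbabilityMeasure μ] {ℱ : Filtration ℕ m}
    {Z : ℕ → Ω → ℝ} (hZ : Supermartingale Z ℱ μ)
    (hnonneg : ∀ i ω, 0 ≤ Z i ω) (hZ0 : ∀ ω, Z 0 ω = 1)
    {ε : ℝ} (hε : 0 < ε) :
    μ {ω | ∃ i, ε ≤ Z i ω} ≤ ENNReal.ofReal (1 / ε) := by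
  set A : ℕ → Set Ω := fun n => ⋃ k ≤ n, {ω | ε ≤ Z k ω} with hA
  have hAmeas : ∀ n, MeasurableSet (A n) := by
    intro n
    refine MeasurableSet.biUnion (Set.to_countable _) fun k _ => ?_
    exact measurableSet_le measurable_const
      ((hZ.stronglyMeasurable k).measurable.le (ℱ.le k))
  have hmono : Monotone A := by
    intro a b hab
    exact Set.biUnion_subset_biUnion_left fun k hk => le_trans hk hab
  have hsub : {ω | ∃ i, ε ≤ Z i ω} ⊆ ⋃ n, A n := by
    rintro ω ⟨i, hi⟩
    exact Set.mem_iUnion.2 ⟨i, Set.mem_iUnion.2 ⟨i, Set.mem_iUnion.2 ⟨le_rfl, hi⟩⟩⟩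
  have hunion : μ (⋃ n, A n) = ⨆ n, μ (A n) :=
    hmono.measure_iUnion
  refine le_trans (measure_mono hsub) (hunion ▸ iSup_le fun n => ?_)
  -- per-n bound via optional stopping
  set τ : Ω → WithTop ℕ := fun ω ↦ (hittingBtwn Z (Set.Ici ε) 0 n ω : ℕ) with hτdef
  have hτ : IsStoppingTime ℱ τ := hZ.1.adapted.isStoppingTime_hittingBtwn measurableSet_Ici
  have hτle : ∀ ω, τ ω ≤ (n : WithTop ℕ) := fun ω => WithTop.coe_le_coe.2 (hittingBtwn_le ω)
  have hSVint : Integrable (stoppedValue Z τ) μ := by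
    have h := (hZ.neg.integrable_stoppedValue hτ hτle).neg
    convert h using 1
    funext ω
    simp [stoppedValue]
  have hSVnonneg : ∀ ω, 0 ≤ stoppedValue Z τ ω := fun ω => hnonneg _ ω
  have hpt : ∀ ω ∈ A n, ε ≤ stoppedValue Z τ ω := by
    intro ω hω
    simp only [hA, Set.mem_iUnion, Set.mem_setOf_eq] at hω
    obtain ⟨k, hkn, hk⟩ := hω
    exact stoppedValue_hittingBtwn_mem ⟨k, ⟨Nat.zero_le _, hkn⟩, hk⟩
  have h1 : ε * (μ (A n)).toReal ≤ ∫ ω in A n, stoppedValue Z τ ω ∂μ :=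
    by have := setIntegral_ge_of_const_le (hAmeas n) (measure_ne_top μ _) hpt hSVint.integrableOn
       rwa [smul_eq_mul, mul_comm] at this
  have h2 : ∫ ω in A n, stoppedValue Z τ ω ∂μ ≤ ∫ ω, stoppedValue Z τ ω ∂μ :=
    setIntegral_le_integral hSVint (ae_of_all _ hSVnonneg)
  have h3 : ∫ ω, stoppedValue Z τ ω ∂μ ≤ 1 := by
    have h := hZ.neg.expected_stoppedValue_mono (isStoppingTime_const ℱ 0) hτ
      (fun ω => WithTop.coe_le_coe.2 (Nat.zero_le _)) (fun ω => hτle ω)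
    have he : stoppedValue (-Z) (fun _ => ((0:ℕ) : WithTop ℕ)) = -Z 0 := rfl
    have he2 : stoppedValue (-Z) τ = -(stoppedValue Z τ) := by
      funext ω; simp [stoppedValue]
    change ∫ x, (-Z 0) x ∂μ ≤ _ at h
    rw [he2] at h
    simp only [Pi.neg_apply, integral_neg, neg_le_neg_iff] at h
    calc ∫ ω, stoppedValue Z τ ω ∂μ ≤ ∫ ω, Z 0 ω ∂μ := h
      _ = 1 := by simp [hZ0]
  have h4 : ε * (μ (A n)).toReal ≤ 1 := le_trans h1 (le_trans h2 h3)
  rw [ENNReal.le_ofReal_iff_toReal_le (measure_ne_top μ _) (by positivity)]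
  rw [le_div_iff₀ hε] at *
  linarith

end Ville

end FreedmanAux

/-- Freedman's inequality for supermartingales: if `|ΔX(i)| ≤ K` for all `i` and
`V(i) = Σ_{j<i} E[(ΔX(j))² | F(j)]`, then for all `t, v > 0`,
`P(∃ i, X(i) ≥ X(0) + t and V(i) ≤ v) ≤ exp(-t²/(2(v + Kt)))`. -/
theorem freedman_inequality {Ω : Type*} {m : MeasurableSpace Ω}
    {μ : Measure Ω} [IsProbabilityMeasure μ]
    (ℱ : Filtration ℕ m) (X : ℕ → Ω → ℝ) (hX : Supermartingale X ℱ μ)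
    (K : ℝ) (hK : ∀ i ω, |X (i + 1) ω - X i ω| ≤ K)
    (t v : ℝ) (ht : 0 < t) (hv : 0 < v) :
    μ {ω | ∃ i : ℕ, X 0 ω + t ≤ X i ω ∧
        (∑ j ∈ Finset.range i,
          (μ[fun ω' => (X (j + 1) ω' - X j ω') ^ 2 | ℱ j]) ω) ≤ v}
      ≤ ENNReal.ofReal (Real.exp (-t ^ 2 / (2 * (v + K * t)))) := by
  classical
  -- `Ω` is nonempty and `K ≥ 0`
  have hΩ : Nonempty Ω := by
    by_contra h
    rw [not_nonempty_iff] at h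
    have h1 : μ Set.univ = 1 := measure_univ
    rw [show (Set.univ : Set Ω) = ∅ from Set.univ_eq_empty_iff.2 h, measure_empty] at h1
    exact zero_ne_one h1
  have hK0 : 0 ≤ K := le_trans (abs_nonneg _) (hK 0 (Classical.choice hΩ))
  have hvKt : 0 < v + K * t := by positivity
  -- parameters
  set l : ℝ := t / (v + K * t) with hl_def
  have hl : 0 < l := div_pos ht hvKt
  have hlK : l * K < 1 := by
    rw [hl_def, div_mul_eq_mul_div, div_lt_one hvKt]
    nlinarith
  have h1lK : 0 < 1 - l * K := by linarith
  set c : ℝ := l ^ 2 / (2 * (1 - l * K)) with hc_def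
  have hc : 0 ≤ c := by positivity
  -- the conditional variances
  set W : ℕ → Ω → ℝ := fun j => μ[fun ω' => (X (j + 1) ω' - X j ω') ^ 2|ℱ j] with hW_def
  have hWapp : ∀ j (ω : Ω),
      (μ[fun ω' => (X (j + 1) ω' - X j ω') ^ 2|ℱ j]) ω = W j ω := fun j ω => by rw [hW_def]
  -- integrability of increments
  have hΔsm : ∀ j, StronglyMeasurable (fun ω => X (j + 1) ω - X j ω) := fun j =>
    ((hX.stronglyMeasurable (j + 1)).mono (ℱ.le (j + 1))).sub
      ((hX.stronglyMeasurable j).mono (ℱ.le j))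
  have hΔint : ∀ j, Integrable (fun ω => X (j + 1) ω - X j ω) μ := fun j =>
    (hX.integrable (j + 1)).sub (hX.integrable j)
  have hΔ2int : ∀ j, Integrable (fun ω => (X (j + 1) ω - X j ω) ^ 2) μ := by
    intro j
    refine Integrable.mono' (integrable_const (K ^ 2))
      ((hΔsm j).pow 2).aestronglyMeasurable (ae_of_all _ fun ω => ?_)
    rw [Real.norm_eq_abs, abs_pow]
    have h := hK j ω
    have h2 := abs_nonneg (X (j + 1) ω - X j ω)
    nlinarith
  -- properties of W
  have hWsm : ∀ j, StronglyMeasurable[ℱ j] (W j) := fun j => by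
    rw [hW_def]; exact stronglyMeasurable_condExp
  have hWnn : ∀ j, 0 ≤ᵐ[μ] W j := fun j => by
    rw [hW_def]; exact condExp_nonneg (ae_of_all _ fun ω => sq_nonneg _)
  have hWall : ∀ᵐ ω ∂μ, ∀ j, 0 ≤ W j ω := ae_all_iff.2 hWnn
  -- the exponential supermartingale
  set Z : ℕ → Ω → ℝ := fun i ω =>
    Real.exp (l * (X i ω - X 0 ω) - c * ∑ j ∈ Finset.range i, W j ω) with hZ_def
  have hZpos : ∀ i ω, 0 < Z i ω := fun i ω => Real.exp_pos _
  have hZ0 : ∀ ω, Z 0 ω = 1 := fun ω => by simp [hZ_def]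
  -- measurability
  have hZsm : ∀ i, StronglyMeasurable[ℱ i] (Z i) := by
    intro i
    refine (Real.continuous_exp.comp_stronglyMeasurable ?_)
    refine StronglyMeasurable.sub ?_ ?_
    · exact ((hX.stronglyMeasurable i).sub
        ((hX.stronglyMeasurable 0).mono (ℱ.mono (Nat.zero_le i)))).const_mul l
    · refine StronglyMeasurable.const_mul ?_ c
      have : ∀ j ∈ Finset.range i, StronglyMeasurable[ℱ i] (W j) := fun j hj =>
        (hWsm j).mono (ℱ.mono (Finset.mem_range.mp hj).le)
      exact Finset.stronglyMeasurable_fun_sum _ this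
  -- pointwise bound on X i - X 0
  have hXd : ∀ i (ω : Ω), |X i ω - X 0 ω| ≤ i * K := by
    intro i ω
    induction i with
    | zero => simp
    | succ n ih =>
      have h := hK n ω
      have : |X (n + 1) ω - X 0 ω| ≤ |X (n + 1) ω - X n ω| + |X n ω - X 0 ω| := by
        have := abs_sub_abs_le_abs_sub (X (n + 1) ω - X 0 ω) (X n ω - X 0 ω)
        calc |X (n + 1) ω - X 0 ω|
            = |(X (n + 1) ω - X n ω) + (X n ω - X 0 ω)| := by ring_nf
          _ ≤ _ := abs_add_le _ _
      push_cast
      nlinarith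
  -- integrability of Z
  have hZint : ∀ i, Integrable (Z i) μ := by
    intro i
    refine Integrable.mono' (integrable_const (Real.exp (l * (i * K))))
      ((hZsm i).mono (ℱ.le i)).aestronglyMeasurable ?_
    filter_upwards [hWall] with ω hω
    rw [Real.norm_eq_abs, abs_of_pos (hZpos i ω), hZ_def]
    apply Real.exp_le_exp.2
    have h1 : l * (X i ω - X 0 ω) ≤ l * (i * K) :=
      mul_le_mul_of_nonneg_left (le_trans (le_abs_self _) (hXd i ω)) hl.le
    have h2 : 0 ≤ c * ∑ j ∈ Finset.range i, W j ω :=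
      mul_nonneg hc (Finset.sum_nonneg fun j _ => hω j)
    linarith
  -- the supermartingale property
  have hZsuper : Supermartingale Z ℱ μ := by
    refine supermartingale_nat (fun i => hZsm i) hZint ?_
    intro i
    set g : Ω → ℝ := fun ω => Z i ω * Real.exp (-(c * W i ω)) with hg_def
    set f : Ω → ℝ := fun ω => Real.exp (l * (X (i + 1) ω - X i ω)) with hf_def
    have hgf : Z (i + 1) = g * f := by
      funext ω
      rw [hZ_def]
      simp only [hg_def, hf_def, Pi.mul_apply, hZ_def]
      rw [← Real.exp_add, ← Real.exp_add]
      congr 1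
      rw [Finset.sum_range_succ]
      ring
    have hgsm : StronglyMeasurable[ℱ i] g :=
      (hZsm i).mul (Real.continuous_exp.comp_stronglyMeasurable ((hWsm i).const_mul c).neg)
    have hfint : Integrable f μ := by
      refine Integrable.mono' (integrable_const (Real.exp (l * K)))
        (Real.continuous_exp.comp_stronglyMeasurable
          ((hΔsm i).const_mul l)).aestronglyMeasurable (ae_of_all _ fun ω => ?_)
      rw [Real.norm_eq_abs, hf_def, abs_of_pos (Real.exp_pos _)]
      apply Real.exp_le_exp.2
      exact mul_le_mul_of_nonneg_left (le_trans (le_abs_self _) (hK i ω)) hl.le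
    have hmul : μ[g * f|ℱ i] =ᵐ[μ] g * μ[f|ℱ i] :=
      condExp_mul_of_stronglyMeasurable_left hgsm (hgf ▸ hZint (i + 1)) hfint
    -- conditional bound on f
    have hfbd : μ[f|ℱ i] ≤ᵐ[μ] fun ω => Real.exp (c * W i ω) := by
      have hpt : ∀ ω, f ω ≤ 1 + l * (X (i + 1) ω - X i ω) + c * (X (i + 1) ω - X i ω) ^ 2 := by
        intro ω
        rw [hf_def, hc_def]
        have := exp_le_one_add_mul_add_sq hl.le hlK (hK i ω)
        linarith
      have hrhs_int : Integrable
          (fun ω => 1 + l * (X (i + 1) ω - X i ω) + c * (X (i + 1) ω - X i ω) ^ 2) μ :=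
        ((integrable_const 1).add ((hΔint i).const_mul l)).add ((hΔ2int i).const_mul c)
      have hmono := condExp_mono (m := ℱ i) hfint hrhs_int (ae_of_all _ hpt)
      -- compute the condexp of the RHS
      have hsplit : (fun ω => 1 + l * (X (i + 1) ω - X i ω) + c * (X (i + 1) ω - X i ω) ^ 2)
          = (fun ω => 1 + l * (X (i + 1) ω - X i ω)) + fun ω => c * (X (i + 1) ω - X i ω) ^ 2 :=
        rfl
      have hsplit2 : (fun ω => 1 + l * (X (i + 1) ω - X i ω))
          = (fun _ : Ω => (1:ℝ)) + fun ω => l * (X (i + 1) ω - X i ω) := rfl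
      have hA : μ[fun ω => 1 + l * (X (i + 1) ω - X i ω) + c * (X (i + 1) ω - X i ω) ^ 2|ℱ i]
          =ᵐ[μ] μ[fun ω => 1 + l * (X (i + 1) ω - X i ω)|ℱ i]
            + μ[fun ω => c * (X (i + 1) ω - X i ω) ^ 2|ℱ i] := by
        rw [hsplit]
        exact condExp_add ((integrable_const 1).add ((hΔint i).const_mul l))
          ((hΔ2int i).const_mul c) _
      have hB : μ[fun ω => 1 + l * (X (i + 1) ω - X i ω)|ℱ i]
          =ᵐ[μ] (fun _ => (1:ℝ)) + μ[fun ω => l * (X (i + 1) ω - X i ω)|ℱ i] := by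
        rw [hsplit2]
        refine (condExp_add (integrable_const 1) ((hΔint i).const_mul l) _).trans ?_
        rw [condExp_const (ℱ.le i)]
      have hC : μ[fun ω => l * (X (i + 1) ω - X i ω)|ℱ i]
          =ᵐ[μ] l • μ[fun ω => X (i + 1) ω - X i ω|ℱ i] := by
        have : (fun ω => l * (X (i + 1) ω - X i ω))
            = l • fun ω => X (i + 1) ω - X i ω := rfl
        rw [this]
        exact condExp_smul l _ _
      have hD : μ[fun ω => c * (X (i + 1) ω - X i ω) ^ 2|ℱ i]
          =ᵐ[μ] c • μ[fun ω => (X (i + 1) ω - X i ω) ^ 2|ℱ i] := by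
        have : (fun ω => c * (X (i + 1) ω - X i ω) ^ 2)
            = c • fun ω => (X (i + 1) ω - X i ω) ^ 2 := rfl
        rw [this]
        exact condExp_smul c _ _
      -- the drift is nonpositive
      have hdrift : μ[fun ω => X (i + 1) ω - X i ω|ℱ i] ≤ᵐ[μ] 0 := by
        have heq : (fun ω => X (i + 1) ω - X i ω) = X (i + 1) - X i := rfl
        have hsub : μ[X (i + 1) - X i|ℱ i] =ᵐ[μ] μ[X (i + 1)|ℱ i] - μ[X i|ℱ i] :=
          condExp_sub (hX.integrable (i + 1)) (hX.integrable i) _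
        have hXi : μ[X i|ℱ i] = X i :=
          condExp_of_stronglyMeasurable (ℱ.le i) (hX.stronglyMeasurable i) (hX.integrable i)
        have hle : μ[X (i + 1)|ℱ i] ≤ᵐ[μ] X i := hX.2.1 i (i + 1) (Nat.le_succ i)
        rw [heq]
        filter_upwards [hsub, hle] with ω h1 h2
        rw [Pi.zero_apply]
        rw [h1, Pi.sub_apply, hXi]
        linarith
      filter_upwards [hmono, hA, hB, hC, hD, hdrift] with ω h1 h2 h3 h4 h5 h6
      have hW_ae : (μ[fun ω' => (X (i + 1) ω' - X i ω') ^ 2|ℱ i]) ω = W i ω := hWapp i ω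
      have : (μ[f|ℱ i]) ω ≤ 1 + l * (μ[fun ω => X (i + 1) ω - X i ω|ℱ i]) ω + c * W i ω := by
        rw [← hW_ae]
        calc (μ[f|ℱ i]) ω ≤ _ := h1
          _ = _ := by
            rw [h2, Pi.add_apply, h3, Pi.add_apply, h4, h5]
            simp [smul_eq_mul]
      have h7 : (μ[fun ω => X (i + 1) ω - X i ω|ℱ i]) ω ≤ 0 := h6
      have h8 : (μ[f|ℱ i]) ω ≤ 1 + c * W i ω := by nlinarith
      have h9 : 1 + c * W i ω ≤ Real.exp (c * W i ω) := by
        have := Real.add_one_le_exp (c * W i ω); linarith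
      linarith
    -- put it together
    calc μ[Z (i + 1)|ℱ i] =ᵐ[μ] g * μ[f|ℱ i] := hgf ▸ hmul
      _ ≤ᵐ[μ] Z i := by
        filter_upwards [hfbd] with ω hω
        rw [Pi.mul_apply]
        have hg0 : 0 ≤ g ω := le_of_lt (by rw [hg_def]; positivity)
        calc g ω * (μ[f|ℱ i]) ω ≤ g ω * Real.exp (c * W i ω) :=
            mul_le_mul_of_nonneg_left hω hg0
          _ = Z i ω := by
            rw [hg_def, mul_assoc, ← Real.exp_add, neg_add_cancel, Real.exp_zero, mul_one]
  -- event inclusion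
  set ε : ℝ := Real.exp (l * t - c * v) with hε_def
  have hε : 0 < ε := Real.exp_pos _
  have hincl : {ω | ∃ i : ℕ, X 0 ω + t ≤ X i ω ∧
      (∑ j ∈ Finset.range i, (μ[fun ω' => (X (j + 1) ω' - X j ω') ^ 2|ℱ j]) ω) ≤ v}
      ⊆ {ω | ∃ i, ε ≤ Z i ω} := by
    rintro ω ⟨i, h1, h2⟩
    have h2' : ∑ j ∈ Finset.range i, W j ω ≤ v := by
      rw [← Finset.sum_congr rfl fun j _ => hWapp j ω]
      exact h2
    refine ⟨i, ?_⟩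
    rw [hε_def, hZ_def]
    apply Real.exp_le_exp.2
    have ha : l * t ≤ l * (X i ω - X 0 ω) :=
      mul_le_mul_of_nonneg_left (by linarith) hl.le
    have hb : c * ∑ j ∈ Finset.range i, W j ω ≤ c * v :=
      mul_le_mul_of_nonneg_left h2' hc
    linarith
  -- conclude via Ville's inequality
  have hville := ville_inequality hZsuper (fun i ω => (hZpos i ω).le) hZ0 hε
  have hfrac : 1 - l * K = v / (v + K * t) := by
    rw [hl_def]; field_simp; ring
  have hkey : l * t - c * v = t ^ 2 / (2 * (v + K * t)) := by
    rw [hc_def, hfrac, hl_def]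
    field_simp
    ring
  refine le_trans (le_trans (measure_mono hincl) hville) (le_of_eq ?_)
  rw [hε_def, one_div, ← Real.exp_neg, hkey, neg_div]
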